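/- For each t ∈ εℤ with t > 0, Σ_{x∈εℤ} a₁(x,t,m,ε)² = (mε/√(1+m²ε²)) · Σ_{k=1}^{t/ε − 1} a₁(0, 2kε, m, ε). -/

import Mathlib

open scoped BigOperators

/-- The final x-coordinate of a checker path from `(0,0)` encoded by its sequence of moves
(`true` = move `(1,1)`, `false` = move `(-1,1)`). -/
def moveEndpoint {n : ℕ} (d : Fin n → Bool) : ℤ :=
  ∑ k, (if d k then (1 : ℤ) else -1)

/-- The number of turns of a checker path encoded by its sequence of moves. -/
def nturns {n : ℕ} (d : Fin n → Bool) : ℕ :=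
  ((List.ofFn d).zip (List.ofFn d).tail).countP fun p => p.1 != p.2

/-- Checker paths from `(0,0)` to `(x,t)` whose first step is to `(1,1)`,
encoded by their sequences of moves. -/
def cpaths (x t : ℤ) : Finset (Fin t.toNat → Bool) :=
  Finset.univ.filter fun d => moveEndpoint d = x ∧ (List.ofFn d).headI = true

/-- Feynman checkers amplitude with mass: `a(x·ε, t·ε, m, ε)` written in lattice
coordinates, i.e. `am m ε x t = (1+m²ε²)^((1-t)/2) * i * ∑ₛ (-i·m·ε)^turns(s)`. -/
noncomputable def am (m ε : ℝ) (x t : ℤ) : ℂ :=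
  (Real.sqrt (1 + m ^ 2 * ε ^ 2) : ℂ) ^ (1 - t) * Complex.I *
    ∑ d ∈ cpaths x t, (-Complex.I * (m * ε)) ^ nturns d


def lturns (l : List Bool) : ℕ := (l.zip l.tail).countP fun p => p.1 != p.2

lemma lturns_cons (a b : Bool) (l : List Bool) :
    lturns (a :: b :: l) = (if a != b then 1 else 0) + lturns (b :: l) := by
  simp only [lturns, List.tail_cons, List.zip_cons_cons, List.countP_cons]
  rcases a <;> rcases b <;> simp [Nat.add_comm]

lemma lturns_append_singleton (l : List Bool) (hl : l ≠ []) (b : Bool) :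
    lturns (l ++ [b]) = lturns l + (if l.getLast hl != b then 1 else 0) := by
  induction l with
  | nil => simp at hl
  | cons a l ih =>
    cases l with
    | nil =>
      cases a <;> cases b <;> simp [lturns, List.getLast]
    | cons a' l' =>
      have h1 : (a :: a' :: l') ++ [b] = a :: ((a' :: l') ++ [b]) := by simp
      have h3 : (a :: a' :: l').getLast hl = (a' :: l').getLast (by simp) := by
        rw [List.getLast_cons]
      rw [h1, (show (a' :: l') ++ [b] = a' :: (l' ++ [b]) by simp), lturns_cons, ← (show (a' :: l') ++ [b] = a' :: (l' ++ [b]) by simp), ih (by simp), lturns_cons, h3]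
      ring

lemma ofFn_snoc {n : ℕ} (e : Fin n → Bool) (b : Bool) :
    List.ofFn (Fin.snoc e b) = List.ofFn e ++ [b] := by
  rw [List.ofFn_succ']
  simp [Fin.snoc_castSucc, List.concat_eq_append]

lemma nturns_snoc {n : ℕ} (e : Fin (n+1) → Bool) (b : Bool) :
    nturns (Fin.snoc e b) = nturns e + (if e (Fin.last n) != b then 1 else 0) := by
  have h1 : (List.ofFn e) ≠ [] := by simp
  have h2 := lturns_append_singleton (List.ofFn e) h1 b
  rw [List.getLast_ofFn] at h2
  show lturns _ = lturns _ + _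
  rw [ofFn_snoc, h2]
  congr 2

lemma moveEndpoint_snoc {n : ℕ} (e : Fin n → Bool) (b : Bool) :
    moveEndpoint (Fin.snoc e b) = moveEndpoint e + (if b then (1:ℤ) else -1) := by
  unfold moveEndpoint
  rw [Fin.sum_univ_castSucc]
  simp [Fin.snoc_castSucc]

lemma headI_snoc {n : ℕ} (e : Fin (n+1) → Bool) (b : Bool) :
    (List.ofFn (Fin.snoc e b)).headI = (List.ofFn e).headI := by
  rw [ofFn_snoc]
  simp

def eset (x : ℤ) (n : ℕ) (b : Bool) : Finset (Fin (n+1) → Bool) :=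
  Finset.univ.filter fun d =>
    moveEndpoint d = x ∧ (List.ofFn d).headI = true ∧ d (Fin.last n) = b

noncomputable def bE (z : ℂ) (x : ℤ) (n : ℕ) (b : Bool) : ℂ :=
  ∑ d ∈ eset x n b, z ^ nturns d

lemma bE_zero (z : ℂ) (x : ℤ) (b : Bool) :
    bE z x 0 b = if x = 1 ∧ b = true then 1 else 0 := by
  unfold bE eset
  rw [Finset.sum_filter]
  rw [Fintype.sum_equiv (Equiv.funUnique (Fin 1) Bool)
    (fun d : Fin 1 → Bool =>
      if moveEndpoint d = x ∧ (List.ofFn d).headI = true ∧ d (Fin.last 0) = b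
      then z ^ nturns d else 0)
    (fun c : Bool => if ((if c then (1:ℤ) else -1) = x ∧ c = true ∧ c = b) then 1 else 0)
    ?_]
  · cases b <;> rcases eq_or_ne x 1 with rfl | h <;>
      simp_all [Fintype.sum_bool, eq_comm, -Finset.sum_boole]
  · intro d
    have h0 : moveEndpoint d = (if d 0 then (1:ℤ) else -1) := by
      simp [moveEndpoint, Fin.sum_univ_one]
    have h1 : (List.ofFn d).headI = d 0 := by
      rw [List.ofFn_succ]; rfl
    have h2 : d (Fin.last 0) = d 0 := rfl
    have h3 : nturns d = 0 := rfl
    rw [h0, h1, h2, h3]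
    rfl

lemma mem_eset_iff {x : ℤ} {n : ℕ} {b : Bool} {d : Fin (n+1) → Bool} :
    d ∈ eset x n b ↔
      moveEndpoint d = x ∧ (List.ofFn d).headI = true ∧ d (Fin.last n) = b := by
  simp [eset]

lemma bE_succ (z : ℂ) (x : ℤ) (n : ℕ) (b : Bool) :
    bE z x (n+1) b
      = bE z (x - (if b then 1 else -1)) n b
        + z * bE z (x - (if b then 1 else -1)) n (!b) := by
  set y : ℤ := x - (if b then 1 else -1) with hy
  have hsnoc_mem : ∀ e : Fin (n+1) → Bool, ∀ b' : Bool,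
      e ∈ eset y n b' → Fin.snoc e b ∈ eset x (n+1) b := by
    intro e b' he
    rw [mem_eset_iff] at he ⊢
    refine ⟨?_, ?_, ?_⟩
    · rw [moveEndpoint_snoc, he.1]; omega
    · rw [headI_snoc]; exact he.2.1
    · exact Fin.snoc_last _ _
  have hd_eq : ∀ d : Fin (n+2) → Bool, d ∈ eset x (n+1) b →
      d = Fin.snoc (Fin.init d) b := by
    intro d hd
    rw [mem_eset_iff] at hd
    conv_lhs => rw [← Fin.snoc_init_self d]
    rw [hd.2.2]
  have h1 : bE z x (n+1) b
      = ∑ e ∈ eset y n b ∪ eset y n (!b),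
          z ^ nturns e * (if e (Fin.last n) = b then 1 else z) := by
    unfold bE
    refine Finset.sum_nbij' (fun d => Fin.init d) (fun e => Fin.snoc e b)
      ?_ ?_ ?_ ?_ ?_
    · intro d hd
      have hde := hd_eq d hd
      rw [mem_eset_iff] at hd
      rcases hd with ⟨hm, hh, hl⟩
      rw [Finset.mem_union, mem_eset_iff, mem_eset_iff]
      have hm' : moveEndpoint (Fin.init d) = y := by
        have := moveEndpoint_snoc (Fin.init d) b
        rw [← hde] at this
        omega
      have hh' : (List.ofFn (Fin.init d)).headI = true := by
        have := headI_snoc (Fin.init d) b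
        rw [← hde] at this
        rw [← this, hh]
      rcases Bool.eq_false_or_eq_true (Fin.init d (Fin.last n)) with h | h
      · rcases b with _ | _ <;> [right; left] <;> exact ⟨hm', hh', by simp [h]⟩
      · rcases b with _ | _ <;> [left; right] <;> exact ⟨hm', hh', by simp [h]⟩
    · intro e he
      rw [Finset.mem_union] at he
      rcases he with he | he
      · exact hsnoc_mem e b he
      · exact hsnoc_mem e (!b) he
    · intro d hd
      exact (hd_eq d hd).symm
    · intro e _
      exact Fin.init_snoc (α := fun _ => Bool) b e
    · intro d hd
      conv_lhs => rw [hd_eq d hd]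
      rw [nturns_snoc]
      rcases Bool.eq_false_or_eq_true (Fin.init d (Fin.last n)) with h | h <;>
        rcases b with _ | _ <;> simp [h, pow_succ]
  have hdisj : Disjoint (eset y n b) (eset y n (!b)) := by
    rw [Finset.disjoint_left]
    intro e he1 he2
    rw [mem_eset_iff] at he1 he2
    have := he1.2.2 ▸ he2.2.2
    simp at this
  rw [h1, Finset.sum_union hdisj]
  congr 1
  · refine Finset.sum_congr rfl (fun e he => ?_)
    rw [mem_eset_iff] at he
    rw [he.2.2, if_pos rfl, mul_one]
  · rw [bE, Finset.mul_sum]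
    refine Finset.sum_congr rfl (fun e he => ?_)
    rw [mem_eset_iff] at he
    have hne : e (Fin.last n) ≠ b := by rw [he.2.2]; cases b <;> simp
    rw [if_neg hne, mul_comm]

lemma cpaths_eq (x : ℤ) (n : ℕ) :
    cpaths x ((n+1 : ℕ) : ℤ) = eset x n true ∪ eset x n false := by
  ext d
  simp only [cpaths, eset, Finset.mem_filter, Finset.mem_union, Finset.mem_univ, true_and]
  constructor
  · rintro ⟨h1, h2⟩
    rcases Bool.eq_false_or_eq_true (d (Fin.last n)) with h | h
    · exact Or.inl ⟨h1, h2, h⟩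
    · exact Or.inr ⟨h1, h2, h⟩
  · rintro (⟨h1, h2, _⟩ | ⟨h1, h2, _⟩) <;> exact ⟨h1, h2⟩

lemma am_eq (m ε : ℝ) (x : ℤ) (n : ℕ) :
    am m ε x ((n+1 : ℕ) : ℤ)
      = (Real.sqrt (1 + m ^ 2 * ε ^ 2) : ℂ) ^ (1 - ((n+1 : ℕ) : ℤ)) * Complex.I *
          (bE (-Complex.I * (m * ε)) x n true + bE (-Complex.I * (m * ε)) x n false) := by
  unfold am
  congr 1
  rw [cpaths_eq]
  rw [Finset.sum_union]
  · rfl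
  · rw [Finset.disjoint_left]
    intro e he1 he2
    rw [mem_eset_iff] at he1 he2
    have := he1.2.2 ▸ he2.2.2
    simp at this


noncomputable def zc (m ε : ℝ) : ℂ := -Complex.I * (m * ε)
noncomputable def nn (m ε : ℝ) : ℝ := Real.sqrt (1 + m ^ 2 * ε ^ 2)

lemma nn_pos (m ε : ℝ) : 0 < nn m ε := Real.sqrt_pos.2 (by positivity)

lemma zc_re (m ε : ℝ) : (zc m ε).re = 0 := by simp [zc]
lemma zc_im (m ε : ℝ) : (zc m ε).im = -(m * ε) := by simp [zc]

lemma bE_im_re (m ε : ℝ) (n : ℕ) :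
    ∀ x, (bE (zc m ε) x n true).im = 0 ∧ (bE (zc m ε) x n false).re = 0 := by
  induction n with
  | zero =>
    intro x
    rw [bE_zero, bE_zero]
    constructor <;> split_ifs <;> simp_all
  | succ n ih =>
    intro x
    rw [bE_succ, bE_succ]
    constructor
    · simp [Complex.add_im, Complex.mul_im, zc_re, zc_im,
        (ih (x - 1)).1, (ih (x - 1)).2]
    · simp [Complex.add_re, Complex.mul_re, zc_re, zc_im,
        (ih (x + 1)).1, (ih (x + 1)).2]

lemma am_formula (m ε : ℝ) (n : ℕ) (x : ℤ) :
    am m ε x ((n+1 : ℕ) : ℤ)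
      = ((nn m ε ^ (-(n:ℤ)) : ℝ) : ℂ) *
          ( (↑(-(bE (zc m ε) x n false).im) : ℂ)
            + (↑((bE (zc m ε) x n true).re) : ℂ) * Complex.I ) := by
  have h1 : (1 - ((n+1 : ℕ) : ℤ)) = -(n:ℤ) := by push_cast; ring
  have hT : bE (zc m ε) x n true = ((bE (zc m ε) x n true).re : ℂ) := by
    apply Complex.ext <;> simp [(bE_im_re m ε n x).1]
  have hF : bE (zc m ε) x n false = ((bE (zc m ε) x n false).im : ℂ) * Complex.I := by
    apply Complex.ext <;> simp [(bE_im_re m ε n x).2]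
  rw [am_eq, h1]
  have hnn : ((Real.sqrt (1 + m ^ 2 * ε ^ 2) : ℝ) : ℂ) ^ (-(n:ℤ))
      = ((nn m ε ^ (-(n:ℤ)) : ℝ) : ℂ) := by
    rw [← Complex.ofReal_zpow]; rfl
  rw [hnn, mul_assoc]
  congr 1
  rw [show (-Complex.I * ((m:ℂ) * (ε:ℂ))) = zc m ε from rfl, hT, hF]
  apply Complex.ext <;> simp

lemma am_re (m ε : ℝ) (n : ℕ) (x : ℤ) :
    (am m ε x ((n+1 : ℕ) : ℤ)).re = nn m ε ^ (-(n:ℤ)) * (-(bE (zc m ε) x n false).im) := by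
  rw [am_formula]
  set r : ℝ := nn m ε ^ (-(n:ℤ))
  simp

lemma am_im (m ε : ℝ) (n : ℕ) (x : ℤ) :
    (am m ε x ((n+1 : ℕ) : ℤ)).im = nn m ε ^ (-(n:ℤ)) * (bE (zc m ε) x n true).re := by
  rw [am_formula]
  set r : ℝ := nn m ε ^ (-(n:ℤ))
  simp


lemma zpow_step (m ε : ℝ) (n : ℕ) :
    nn m ε ^ (-((n+1:ℕ):ℤ)) * nn m ε = nn m ε ^ (-(n:ℤ)) := by
  have hne : nn m ε ≠ 0 := (nn_pos m ε).ne'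
  rw [← zpow_add_one₀ hne]
  congr 1
  push_cast
  ring

lemma dirac_re (m ε : ℝ) (n : ℕ) (x : ℤ) :
    (am m ε x ((n+1+1 : ℕ) : ℤ)).re * nn m ε
      = (am m ε (x+1) ((n+1 : ℕ) : ℤ)).re
        + (m*ε) * (am m ε (x+1) ((n+1 : ℕ) : ℤ)).im := by
  rw [am_re m ε (n+1) x, am_re m ε n (x+1), am_im m ε n (x+1), bE_succ]
  have hx : x - (if (false : Bool) then (1:ℤ) else -1) = x + 1 := by norm_num
  rw [hx]
  simp only [Bool.not_false, Complex.add_im, Complex.mul_im, zc_re, zc_im, zero_mul,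
    add_zero, zero_add]
  linear_combination
    (-((bE (zc m ε) (x+1) n false).im + -(m*ε) * (bE (zc m ε) (x+1) n true).re)) *
      zpow_step m ε n


lemma dirac_im (m ε : ℝ) (n : ℕ) (x : ℤ) :
    (am m ε x ((n+1+1 : ℕ) : ℤ)).im * nn m ε
      = (am m ε (x-1) ((n+1 : ℕ) : ℤ)).im
        - (m*ε) * (am m ε (x-1) ((n+1 : ℕ) : ℤ)).re := by
  rw [am_im m ε (n+1) x, am_im m ε n (x-1), am_re m ε n (x-1), bE_succ]
  have hx : x - (if (true : Bool) then (1:ℤ) else -1) = x - 1 := by norm_num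
  rw [hx]
  simp only [Bool.not_true, Complex.add_re, Complex.mul_re, zc_re, zc_im, zero_mul,
    sub_zero, zero_sub, neg_neg, neg_mul]
  linear_combination
    ((bE (zc m ε) (x-1) n true).re + (m*ε) * (bE (zc m ε) (x-1) n false).im) *
      zpow_step m ε n


lemma moveEndpoint_bound {k : ℕ} (d : Fin k → Bool) : |moveEndpoint d| ≤ (k : ℤ) := by
  unfold moveEndpoint
  calc |∑ j, (if d j then (1:ℤ) else -1)| ≤ ∑ j, |(if d j then (1:ℤ) else -1)| :=
        Finset.abs_sum_le_sum_abs _ _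
    _ = ∑ _j : Fin k, (1:ℤ) := by
        refine Finset.sum_congr rfl (fun j _ => ?_)
        split_ifs <;> simp
    _ = (k : ℤ) := by simp

lemma am_vanish (m ε : ℝ) (n : ℕ) (x : ℤ) (h : ((n+1:ℕ):ℤ) < |x|) :
    am m ε x ((n+1:ℕ):ℤ) = 0 := by
  unfold am
  have hempty : cpaths x ((n+1:ℕ):ℤ) = ∅ := by
    rw [Finset.eq_empty_iff_forall_notMem]
    intro d hd
    simp only [cpaths, Finset.mem_filter, Finset.mem_univ, true_and] at hd
    have hb := moveEndpoint_bound d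
    rw [hd.1] at hb
    have : ((((n+1:ℕ):ℤ)).toNat : ℤ) = ((n+1:ℕ):ℤ) := by simp
    omega
  rw [hempty, Finset.sum_empty, mul_zero]

noncomputable def QQ (m ε : ℝ) (k : ℕ) (y : ℤ) : ℝ := (am m ε y ((k+1 : ℕ) : ℤ)).re
noncomputable def PP (m ε : ℝ) (k : ℕ) (y : ℤ) : ℝ := (am m ε y ((k+1 : ℕ) : ℤ)).im

lemma QQ_vanish (m ε : ℝ) (k : ℕ) (y : ℤ) (h : (k:ℤ) + 1 < |y|) : QQ m ε k y = 0 := by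
  unfold QQ
  rw [am_vanish m ε k y (by push_cast; omega), Complex.zero_re]

lemma PP_vanish (m ε : ℝ) (k : ℕ) (y : ℤ) (h : (k:ℤ) + 1 < |y|) : PP m ε k y = 0 := by
  unfold PP
  rw [am_vanish m ε k y (by push_cast; omega), Complex.zero_im]

lemma QQ_zero (m ε : ℝ) (y : ℤ) : QQ m ε 0 y = 0 := by
  unfold QQ
  rw [am_re, bE_zero]
  split_ifs <;> simp

lemma PP_zero (m ε : ℝ) (y : ℤ) : PP m ε 0 y = if y = 1 then 1 else 0 := by
  unfold PP
  rw [am_im, bE_zero]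
  split_ifs <;> simp_all

lemma QQ_succ (m ε : ℝ) (k : ℕ) (y : ℤ) :
    QQ m ε (k+1) y = (QQ m ε k (y+1) + (m*ε) * PP m ε k (y+1)) * (nn m ε)⁻¹ := by
  have h := dirac_re m ε k y
  have hne : nn m ε ≠ 0 := (nn_pos m ε).ne'
  field_simp
  exact h

lemma PP_succ (m ε : ℝ) (k : ℕ) (y : ℤ) :
    PP m ε (k+1) y = (PP m ε k (y-1) - (m*ε) * QQ m ε k (y-1)) * (nn m ε)⁻¹ := by
  have h := dirac_im m ε k y
  have hne : nn m ε ≠ 0 := (nn_pos m ε).ne'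
  field_simp
  exact h


lemma summable_of_bound (f : ℤ → ℝ) (B : ℤ) (h : ∀ y : ℤ, B < |y| → f y = 0) :
    Summable f := by
  refine summable_of_ne_finset_zero (s := Finset.Icc (-B) B) (fun b hb => h b ?_)
  simp only [Finset.mem_Icc] at hb
  rcases abs_cases b with ⟨h1, _⟩ | ⟨h1, _⟩ <;> omega

lemma tsum_shift (f : ℤ → ℝ) (k : ℤ) : ∑' y : ℤ, f (y + k) = ∑' y : ℤ, f y := by
  have := (Equiv.addRight k).tsum_eq f
  simpa using this

lemma tsum_step (c Nv : ℝ) (Qt Pt Qs Ps : ℤ → ℝ) (Bt Bs : ℤ)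
    (hQt : ∀ y : ℤ, Bt < |y| → Qt y = 0) (hPt : ∀ y : ℤ, Bt < |y| → Pt y = 0)
    (hQs : ∀ y : ℤ, Bs < |y| → Qs y = 0) (hPs : ∀ y : ℤ, Bs < |y| → Ps y = 0) :
    ∑' y : ℤ, (Pt y * ((Qs (y+1) + c * Ps (y+1)) * Nv)
        + Qt y * ((Ps (y-1) - c * Qs (y-1)) * Nv)
        + c * (Pt y * ((Ps (y-1) - c * Qs (y-1)) * Nv)
              - Qt y * ((Qs (y+1) + c * Ps (y+1)) * Nv)))
    = ∑' y : ℤ, (((Pt (y-1) - c * Qt (y-1)) * Nv) * Qs y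
        + ((Qt (y+1) + c * Pt (y+1)) * Nv) * Ps y
        + c * (((Pt (y-1) - c * Qt (y-1)) * Nv) * Ps y
              - ((Qt (y+1) + c * Pt (y+1)) * Nv) * Qs y)) := by
  set H : ℤ → ℝ := fun y => (Pt y * Qs (y+1) + c * (Pt y * Ps (y+1))
      - c * (Qt y * Qs (y+1)) - c^2 * (Qt y * Ps (y+1))) * Nv with hH
  set K : ℤ → ℝ := fun y => (Qt y * Ps (y-1) - c * (Qt y * Qs (y-1))
      + c * (Pt y * Ps (y-1)) - c^2 * (Pt y * Qs (y-1))) * Nv with hK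
  set H' : ℤ → ℝ := fun y => (Qt (y+1) * Ps y + c * (Pt (y+1) * Ps y)
      - c * (Qt (y+1) * Qs y) - c^2 * (Pt (y+1) * Qs y)) * Nv with hH'
  set K' : ℤ → ℝ := fun y => (Pt (y-1) * Qs y - c * (Qt (y-1) * Qs y)
      + c * (Pt (y-1) * Ps y) - c^2 * (Qt (y-1) * Ps y)) * Nv with hK'
  have sumH : Summable H := by
    refine summable_of_bound _ Bt (fun y hy => ?_)
    simp [hH, hQt y hy, hPt y hy]
  have sumK : Summable K := by
    refine summable_of_bound _ Bt (fun y hy => ?_)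
    simp [hK, hQt y hy, hPt y hy]
  have sumH' : Summable H' := by
    refine summable_of_bound _ Bs (fun y hy => ?_)
    simp [hH', hQs y hy, hPs y hy]
  have sumK' : Summable K' := by
    refine summable_of_bound _ Bs (fun y hy => ?_)
    simp [hK', hQs y hy, hPs y hy]
  calc ∑' y : ℤ, (Pt y * ((Qs (y+1) + c * Ps (y+1)) * Nv)
        + Qt y * ((Ps (y-1) - c * Qs (y-1)) * Nv)
        + c * (Pt y * ((Ps (y-1) - c * Qs (y-1)) * Nv)
              - Qt y * ((Qs (y+1) + c * Ps (y+1)) * Nv)))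
      = ∑' y : ℤ, (H y + K y) := by
        refine tsum_congr (fun y => ?_)
        simp only [hH, hK]
        ring
    _ = (∑' y : ℤ, H y) + ∑' y : ℤ, K y := Summable.tsum_add sumH sumK
    _ = (∑' y : ℤ, K' (y + 1)) + ∑' y : ℤ, H' (y + (-1)) := by
        congr 1
        · refine tsum_congr (fun y => ?_)
          simp only [hH, hK']
          ring_nf
        · refine tsum_congr (fun y => ?_)
          simp only [hK, hH']
          ring_nf
    _ = (∑' y : ℤ, K' y) + ∑' y : ℤ, H' y := by
        rw [tsum_shift K' 1, tsum_shift H' (-1)]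
    _ = ∑' y : ℤ, (H' y + K' y) := by rw [Summable.tsum_add sumH' sumK']; ring
    _ = _ := by
        refine tsum_congr (fun y => ?_)
        simp only [hH', hK']
        ring


lemma claimC (m ε : ℝ) : ∀ s t : ℕ,
    nn m ε * QQ m ε (t+s+1) 0
      = ∑' y : ℤ, (PP m ε t y * QQ m ε s y + QQ m ε t y * PP m ε s y
          + (m*ε) * (PP m ε t y * PP m ε s y - QQ m ε t y * QQ m ε s y)) := by
  intro s
  induction s with
  | zero =>
    intro t
    have hres : ∀ y : ℤ, (PP m ε t y * QQ m ε 0 y + QQ m ε t y * PP m ε 0 y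
        + (m*ε) * (PP m ε t y * PP m ε 0 y - QQ m ε t y * QQ m ε 0 y))
        = if y = 1 then QQ m ε t 1 + (m*ε) * PP m ε t 1 else 0 := by
      intro y
      rw [QQ_zero, PP_zero]
      split_ifs with h
      · subst h; ring
      · ring
    rw [tsum_congr hres, tsum_ite_eq]
    rw [show t+0+1 = t+1 from rfl, QQ_succ m ε t 0]
    have hne : nn m ε ≠ 0 := (nn_pos m ε).ne'
    rw [zero_add]
    field_simp
  | succ s ih =>
    intro t
    rw [show t+(s+1)+1 = (t+1)+s+1 from by omega, ih (t+1)]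
    calc ∑' y : ℤ, (PP m ε (t+1) y * QQ m ε s y + QQ m ε (t+1) y * PP m ε s y
          + (m*ε) * (PP m ε (t+1) y * PP m ε s y - QQ m ε (t+1) y * QQ m ε s y))
        = ∑' y : ℤ, (((PP m ε t (y-1) - (m*ε) * QQ m ε t (y-1)) * (nn m ε)⁻¹) * QQ m ε s y
            + ((QQ m ε t (y+1) + (m*ε) * PP m ε t (y+1)) * (nn m ε)⁻¹) * PP m ε s y
            + (m*ε) * (((PP m ε t (y-1) - (m*ε) * QQ m ε t (y-1)) * (nn m ε)⁻¹) * PP m ε s y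
                  - ((QQ m ε t (y+1) + (m*ε) * PP m ε t (y+1)) * (nn m ε)⁻¹) * QQ m ε s y)) := by
          refine tsum_congr (fun y => ?_)
          rw [QQ_succ m ε t y, PP_succ m ε t y]
      _ = ∑' y : ℤ, (PP m ε t y * ((QQ m ε s (y+1) + (m*ε) * PP m ε s (y+1)) * (nn m ε)⁻¹)
            + QQ m ε t y * ((PP m ε s (y-1) - (m*ε) * QQ m ε s (y-1)) * (nn m ε)⁻¹)
            + (m*ε) * (PP m ε t y * ((PP m ε s (y-1) - (m*ε) * QQ m ε s (y-1)) * (nn m ε)⁻¹)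
                  - QQ m ε t y * ((QQ m ε s (y+1) + (m*ε) * PP m ε s (y+1)) * (nn m ε)⁻¹))) := by
          refine (tsum_step (m*ε) (nn m ε)⁻¹ (QQ m ε t) (PP m ε t) (QQ m ε s) (PP m ε s)
            ((t:ℤ)+1) ((s:ℤ)+1) ?_ ?_ ?_ ?_).symm
          · exact fun y hy => QQ_vanish m ε t y hy
          · exact fun y hy => PP_vanish m ε t y hy
          · exact fun y hy => QQ_vanish m ε s y hy
          · exact fun y hy => PP_vanish m ε s y hy
      _ = ∑' y : ℤ, (PP m ε t y * QQ m ε (s+1) y + QQ m ε t y * PP m ε (s+1) y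
          + (m*ε) * (PP m ε t y * PP m ε (s+1) y - QQ m ε t y * QQ m ε (s+1) y)) := by
          refine tsum_congr (fun y => ?_)
          rw [QQ_succ m ε s y, PP_succ m ε s y]


lemma main_lemma (m ε : ℝ) : ∀ n : ℕ,
    ∑' x : ℤ, (QQ m ε n x)^2
      = m * ε / nn m ε * ∑ k ∈ Finset.Icc (1:ℤ) (n:ℤ), (am m ε 0 (2*k)).re := by
  intro n
  induction n with
  | zero =>
    have e0 : ∀ x : ℤ, (QQ m ε 0 x)^2 = 0 := fun x => by rw [QQ_zero]; ring
    rw [tsum_congr e0, tsum_zero, show ((0:ℕ):ℤ) = 0 from rfl]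
    simp
  | succ n ih =>
    have hN : nn m ε ≠ 0 := (nn_pos m ε).ne'
    have hN2 : nn m ε ^ 2 = 1 + (m*ε)^2 := by
      rw [nn, Real.sq_sqrt (by positivity)]; ring
    have sQ2 : Summable fun x : ℤ => QQ m ε n x ^ 2 :=
      summable_of_bound _ ((n:ℤ)+1) (fun y hy => by rw [QQ_vanish m ε n y hy]; ring)
    have sP2 : Summable fun x : ℤ => PP m ε n x ^ 2 :=
      summable_of_bound _ ((n:ℤ)+1) (fun y hy => by rw [PP_vanish m ε n y hy]; ring)
    have sQP : Summable fun x : ℤ => QQ m ε n x * PP m ε n x :=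
      summable_of_bound _ ((n:ℤ)+1) (fun y hy => by rw [QQ_vanish m ε n y hy]; ring)
    -- LHS transformation
    have e1 : ∀ x : ℤ, QQ m ε (n+1) x ^ 2
        = ((QQ m ε n (x+1) + (m*ε) * PP m ε n (x+1))^2) * ((nn m ε)⁻¹)^2 := fun x => by
      rw [QQ_succ]; ring
    have e2 : ∀ x : ℤ, (QQ m ε n x + (m*ε) * PP m ε n x)^2
        = QQ m ε n x ^ 2 + (2*(m*ε)) * (QQ m ε n x * PP m ε n x)
          + (m*ε)^2 * PP m ε n x ^ 2 := fun x => by ring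
    rw [tsum_congr e1, tsum_mul_right,
      show (∑' (x:ℤ), (QQ m ε n (x+1) + (m*ε) * PP m ε n (x+1))^2)
        = ∑' (x:ℤ), (QQ m ε n x + (m*ε) * PP m ε n x)^2 from
          tsum_shift (fun x => (QQ m ε n x + (m*ε) * PP m ε n x)^2) 1,
      tsum_congr e2,
      Summable.tsum_add (sQ2.add ((sQP.mul_left _))) (sP2.mul_left _),
      Summable.tsum_add sQ2 (sQP.mul_left _), tsum_mul_left, tsum_mul_left]
    -- claim C at t = s = n
    have hC := claimC m ε n n
    have e3 : ∀ y : ℤ, (PP m ε n y * QQ m ε n y + QQ m ε n y * PP m ε n y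
        + (m*ε) * (PP m ε n y * PP m ε n y - QQ m ε n y * QQ m ε n y))
        = (2:ℝ) * (QQ m ε n y * PP m ε n y)
          + ((m*ε) * (PP m ε n y ^ 2) + (-(m*ε)) * (QQ m ε n y ^ 2)) := fun y => by ring
    rw [tsum_congr e3, Summable.tsum_add (sQP.mul_left _) ((sP2.mul_left _).add (sQ2.mul_left _)),
      Summable.tsum_add (sP2.mul_left _) (sQ2.mul_left _), tsum_mul_left, tsum_mul_left,
      tsum_mul_left] at hC
    -- RHS transformation
    have hIcc : Finset.Icc (1:ℤ) ((n+1:ℕ):ℤ) = insert ((n:ℤ)+1) (Finset.Icc 1 (n:ℤ)) := by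
      ext a
      simp only [Finset.mem_Icc, Finset.mem_insert]
      push_cast
      omega
    have hnotmem : ((n:ℤ)+1) ∉ Finset.Icc (1:ℤ) (n:ℤ) := by
      simp only [Finset.mem_Icc]
      omega
    rw [hIcc, Finset.sum_insert hnotmem,
      show 2*((n:ℤ)+1) = ((n+n+1+1:ℕ):ℤ) from by push_cast; ring,
      show (am m ε 0 ((n+n+1+1:ℕ):ℤ)).re = QQ m ε (n+n+1) 0 from rfl,
      mul_add, ← ih]
    -- final algebra
    set S' := ∑' x : ℤ, QQ m ε n x ^ 2 with hS
    set T' := ∑' x : ℤ, PP m ε n x ^ 2 with hT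
    set U' := ∑' x : ℤ, QQ m ε n x * PP m ε n x with hU
    have h1c : (0:ℝ) < 1 + (m*ε)^2 := by positivity
    have hQw : QQ m ε (n+n+1) 0 = (2*U' + ((m*ε)*T' + (-(m*ε))*S')) * (nn m ε)⁻¹ := by
      field_simp
      linarith [hC]
    rw [hQw]
    have hinv : ((nn m ε)⁻¹)^2 = (1 + (m*ε)^2)⁻¹ := by
      rw [← hN2, inv_pow]
    rw [hinv]
    field_simp
    linear_combination (-S'*(m*ε)^2 + 2*(m*ε)*U' + (m*ε)^2*T') * hN2

/-- For each `t ∈ εℤ`, `t > 0`: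
`∑_{x ∈ εℤ} a₁(x,t,m,ε)² = (mε/√(1+m²ε²)) ∑_{k=1}^{t/ε - 1} a₁(0, 2kε, m, ε)`. -/
theorem sum_a1_sq_eq (m ε : ℝ) (hε : 0 < ε) (hm : 0 ≤ m) (t : ℤ) (ht : 0 < t) :
    ∑' x : ℤ, (am m ε x t).re ^ 2 =
      m * ε / Real.sqrt (1 + m ^ 2 * ε ^ 2) *
        ∑ k ∈ Finset.Icc (1 : ℤ) (t - 1), (am m ε 0 (2 * k)).re := by
  obtain ⟨n, hn⟩ : ∃ n : ℕ, t = ((n+1:ℕ):ℤ) := ⟨(t-1).toNat, by omega⟩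
  subst hn
  rw [show Finset.Icc (1:ℤ) (((n+1:ℕ):ℤ) - 1) = Finset.Icc (1:ℤ) (n:ℤ) from by
    congr 1; push_cast; ring]
  have h := main_lemma m ε n
  unfold QQ nn at h
  exact h
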